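/- arXiv:2103.09176 — 2 statements merged into one kernel-verified Lean document; each statement's English description precedes it below -/
import Mathlib

section
/- Let A and B be unital C*-algebras and let Θ = (Θ_t)_{t ∈ [1,∞)} : A → B be a continuous family of maps which is self-adjoint (Θ_t(a*) = Θ_t(a)* for all a, t), unital (Θ_t(1) = 1), asymptotically linear, and asymptotically contractive. Then Θ is asymptotically positive: for every positive a ∈ A, the negative part Θ_t(a)⁻ of the self-adjoint element Θ_t(a) converges to 0 in norm as t → ∞. -/
open Filter Topology

section Aux

variable {B : Type*} [CStarAlgebra B] [PartialOrder B] [StarOrderedRing B]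

lemma aux_algebraMap_nonneg' {r : ℝ} (hr : 0 ≤ r) : 0 ≤ algebraMap ℝ B r := by
  have h : algebraMap ℝ B r
      = star (algebraMap ℝ B (Real.sqrt r)) * algebraMap ℝ B (Real.sqrt r) := by
    rw [show star (algebraMap ℝ B (Real.sqrt r)) = algebraMap ℝ B (Real.sqrt r) from
      IsSelfAdjoint.algebraMap B (isSelfAdjoint_iff.mpr rfl), ← map_mul,
      Real.mul_self_sqrt hr]
  rw [h]
  exact star_mul_self_nonneg _

lemma aux_algebraMap_mono' {c c' : ℝ} (h : c ≤ c') :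
    algebraMap ℝ B c ≤ algebraMap ℝ B c' := by
  have := aux_algebraMap_nonneg' (B := B) (sub_nonneg.mpr h)
  rw [map_sub] at this
  exact sub_nonneg.mp this

lemma aux_negPart_norm_le {b : B} {c : ℝ} (hb : IsSelfAdjoint b) (hc : 0 ≤ c)
    (h : -(algebraMap ℝ B c) ≤ b) : ‖b⁻‖ ≤ c := by
  rw [CFC.negPart_def]
  refine norm_cfcₙ_le fun x hx => ?_
  rw [quasispectrum_eq_spectrum_union_zero] at hx
  have hx' : -c ≤ x := by
    rcases hx with hx | hx
    · have h0 : 0 ≤ b + algebraMap ℝ B c := by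
        rw [← neg_add_cancel (algebraMap ℝ B c)]
        exact add_le_add h le_rfl
      have hmem : x + c ∈ spectrum ℝ (b + algebraMap ℝ B c) := by
        rw [← spectrum.add_singleton_eq]
        exact Set.add_mem_add hx rfl
      have := (StarOrderedRing.nonneg_iff_spectrum_nonneg (R := ℝ) _
        (hb.add (IsSelfAdjoint.algebraMap B (isSelfAdjoint_iff.mpr rfl)))).mp h0 _ hmem
      linarith
    · simp only [Set.mem_singleton_iff] at hx
      subst hx
      linarith
  rw [Real.norm_eq_abs, abs_of_nonneg (negPart_nonneg x), negPart_def]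
  exact sup_le (by linarith) hc

lemma aux_bound {A : Type*} [CStarAlgebra A] (Θ : ℝ → A → B)
    (hequi : Equicontinuous Θ) (hunital : ∀ t, Θ t 1 = 1) (y : A) :
    ∃ C, ∀ t, ‖Θ t y‖ ≤ C := by
  set S : Set A := {z | ∃ C, ∀ t, ‖Θ t z‖ ≤ C} with hS
  have hopen : IsOpen S := by
    rw [Metric.isOpen_iff]
    rintro z ⟨C, hC⟩
    obtain ⟨δ, hδ, hδ'⟩ := Metric.equicontinuousAt_iff.mp (hequi z) 1 one_pos
    refine ⟨δ, hδ, fun w hw => ⟨C + 1, fun t => ?_⟩⟩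
    have h1 := hδ' w (Metric.mem_ball.mp hw) t
    rw [dist_eq_norm] at h1
    have h3 : ‖Θ t w‖ ≤ ‖Θ t z‖ + ‖Θ t z - Θ t w‖ := by
      simpa using norm_sub_le (Θ t z) (Θ t z - Θ t w)
    linarith [hC t]
  have hclosed : IsClosed S := by
    refine isClosed_of_closure_subset fun z hz => ?_
    obtain ⟨δ, hδ, hδ'⟩ := Metric.equicontinuousAt_iff.mp (hequi z) 1 one_pos
    obtain ⟨w, hwS, hw⟩ := Metric.mem_closure_iff.mp hz δ hδ
    obtain ⟨C, hC⟩ := hwS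
    refine ⟨C + 1, fun t => ?_⟩
    have h1 := hδ' w (by rwa [dist_comm] at hw) t
    rw [dist_eq_norm, norm_sub_rev] at h1
    have h3 : ‖Θ t z‖ ≤ ‖Θ t w‖ + ‖Θ t w - Θ t z‖ := by
      simpa using norm_sub_le (Θ t w) (Θ t w - Θ t z)
    linarith [hC t]
  have huniv : S = Set.univ :=
    IsClopen.eq_univ ⟨hclosed, hopen⟩ ⟨1, ‖(1 : B)‖, fun t => by rw [hunital]⟩
  have : y ∈ S := huniv.symm ▸ Set.mem_univ y
  exact this

end Aux

theorem stmt_9 {A B : Type*} [CStarAlgebra A] [PartialOrder A] [StarOrderedRing A]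
    [CStarAlgebra B] [PartialOrder B] [StarOrderedRing B]
    (Θ : ℝ → A → B)
    (hcont : ∀ a, Continuous fun t => Θ t a)
    (hequi : Equicontinuous Θ)
    (hsa : ∀ t a, Θ t (star a) = star (Θ t a))
    (hunital : ∀ t, Θ t 1 = 1)
    (hlin : ∀ (c₁ c₂ : ℂ) (a₁ a₂ : A),
      Tendsto (fun t => ‖Θ t (c₁ • a₁ + c₂ • a₂) - c₁ • Θ t a₁ - c₂ • Θ t a₂‖)
        atTop (nhds 0))
    (hcontr : ∀ a, Filter.limsup (fun t => ‖Θ t a‖) atTop ≤ ‖a‖) :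
    ∀ a : A, 0 ≤ a → Tendsto (fun t => (Θ t a)⁻) atTop (nhds 0) := by
  intro a ha
  have hsa_a : IsSelfAdjoint a := .of_nonneg ha
  have hsaΘ : ∀ t, IsSelfAdjoint (Θ t a) := fun t => by
    have h := hsa t a
    rw [hsa_a.star_eq] at h
    exact isSelfAdjoint_iff.mpr h.symm
  set r : ℝ := ‖a‖ with hrdef
  have hr0 : 0 ≤ r := norm_nonneg a
  set x : A := algebraMap ℝ A r - a with hxdef
  have hx_nonneg : 0 ≤ x := sub_nonneg.mpr hsa_a.le_algebraMap_norm_self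
  have hx_norm : ‖x‖ ≤ r := by
    rw [CStarAlgebra.norm_le_iff_le_algebraMap x hr0 hx_nonneg]
    simpa [hxdef] using ha
  -- the linearity defect
  have hd : Tendsto (fun t => ‖Θ t x - algebraMap ℝ B r + Θ t a‖) atTop (nhds 0) := by
    have := hlin (r : ℂ) (-1) 1 a
    have hxeq : (r : ℂ) • (1 : A) + (-1 : ℂ) • a = x := by
      rw [Complex.coe_smul, ← Algebra.algebraMap_eq_smul_one]
      simp [hxdef, sub_eq_add_neg]
    convert this using 2 with t
    rw [hxeq, hunital, Complex.coe_smul, ← Algebra.algebraMap_eq_smul_one]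
    simp [sub_eq_add_neg]
  -- boundedness and the contractivity bound
  obtain ⟨C, hC⟩ := aux_bound Θ hequi hunital x
  -- conclude
  rw [NormedAddCommGroup.tendsto_nhds_zero]
  intro ε hε
  have hε2 : 0 < ε / 2 := by linarith
  have h1 : ∀ᶠ t in atTop, ‖Θ t x‖ < ‖x‖ + ε / 4 := by
    refine eventually_lt_of_limsup_lt (lt_of_le_of_lt (hcontr x) (by linarith)) ?_
    exact ⟨C, eventually_map.mpr (Eventually.of_forall hC)⟩
  have h2 : ∀ᶠ t in atTop, ‖Θ t x - algebraMap ℝ B r + Θ t a‖ < ε / 4 :=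
    hd.eventually_lt_const (by linarith)
  filter_upwards [h1, h2] with t ht1 ht2
  -- ‖algebraMap r - Θ t a‖ ≤ r + ε/2
  have hkey : ‖algebraMap ℝ B r - Θ t a‖ ≤ r + ε / 2 := by
    have : algebraMap ℝ B r - Θ t a = Θ t x - (Θ t x - algebraMap ℝ B r + Θ t a) := by abel
    rw [this]
    calc ‖Θ t x - (Θ t x - algebraMap ℝ B r + Θ t a)‖
        ≤ ‖Θ t x‖ + ‖Θ t x - algebraMap ℝ B r + Θ t a‖ := norm_sub_le _ _
      _ ≤ r + ε / 2 := by linarith [hx_norm]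
  -- hence -(ε/2) • 1 ≤ Θ t a
  have hsel : IsSelfAdjoint (algebraMap ℝ B r - Θ t a) :=
    (IsSelfAdjoint.algebraMap B (isSelfAdjoint_iff.mpr rfl)).sub (hsaΘ t)
  have hle : algebraMap ℝ B r - Θ t a ≤ algebraMap ℝ B (r + ε / 2) :=
    hsel.le_algebraMap_norm_self.trans (aux_algebraMap_mono' hkey)
  have hge : -(algebraMap ℝ B (ε / 2)) ≤ Θ t a := by
    have := sub_le_sub_right hle (algebraMap ℝ B (r + ε / 2) - Θ t a)
    -- cleanup
    rw [map_add] at hle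
    have : -(algebraMap ℝ B (ε / 2)) = algebraMap ℝ B r - (algebraMap ℝ B r + algebraMap ℝ B (ε / 2)) := by abel
    rw [this]
    exact sub_le_comm.mp hle
  have : ‖(Θ t a)⁻‖ ≤ ε / 2 := aux_negPart_norm_le (hsaΘ t) hε2.le hge
  linarith
end

section
/- Let A and B be unital C*-algebras and Θ = (Θ_t)_{t ∈ [1,∞)} : A → B a continuous family of maps such that each Θ_t and each Θ_t ⊗ id_{M_n} (entrywise application) is self-adjoint, unital, and such that Θ ⊗ id_{M_n} is asymptotically linear and asymptotically contractive for every n ≥ 1. Then Θ is asymptotically completely positive: for each n and each positive a ∈ M_n(A), the negative part (Θ_t ⊗ id_{M_n})(a)⁻ converges to 0 in norm as t → ∞. -/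
open Filter Topology

/-- An equicontinuous family of maps between C*-algebras that is bounded at `1`
is pointwise uniformly bounded. -/
lemma aux_bounded {A B : Type*} [CStarAlgebra A] [CStarAlgebra B]
    (Θ : ℝ → A → B) (hequi : Equicontinuous Θ)
    (h1 : ∀ t, Θ t 1 = 1) (c : A) : ∃ C, ∀ t, ‖Θ t c‖ ≤ C := by
  set S : Set A := {p | ∃ C, ∀ t, ‖Θ t p‖ ≤ C} with hS
  have key : ∀ p : A, ∃ δ > 0, ∀ q, dist q p < δ → ∀ t, dist (Θ t p) (Θ t q) < 1 := by
    intro p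
    obtain ⟨δ, hδ, hd⟩ := (Metric.equicontinuousAt_iff.mp (hequi p)) 1 one_pos
    exact ⟨δ, hδ, fun q hq t => hd q hq t⟩
  have hopen : IsOpen S := by
    rw [isOpen_iff_mem_nhds]
    rintro p ⟨C, hC⟩
    obtain ⟨δ, hδ, hd⟩ := key p
    filter_upwards [Metric.ball_mem_nhds p hδ] with q hq
    refine ⟨C + 1, fun t => ?_⟩
    have h2 := hd q (by simpa [Metric.mem_ball] using hq) t
    calc ‖Θ t q‖ = dist (Θ t q) 0 := by simp
      _ ≤ dist (Θ t q) (Θ t p) + dist (Θ t p) 0 := dist_triangle _ _ _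
      _ ≤ 1 + C := by
        rw [dist_comm (Θ t q)]
        have := hC t
        simp only [dist_zero_right] at *
        exact add_le_add h2.le this
      _ = C + 1 := by ring
  have hclosed : IsClosed S := by
    rw [← isOpen_compl_iff]
    rw [isOpen_iff_mem_nhds]
    intro p hp
    obtain ⟨δ, hδ, hd⟩ := key p
    filter_upwards [Metric.ball_mem_nhds p hδ] with q hq hqS
    apply hp
    obtain ⟨C, hC⟩ := hqS
    refine ⟨C + 1, fun t => ?_⟩
    have h2 := hd q (by simpa [Metric.mem_ball] using hq) t
    calc ‖Θ t p‖ = dist (Θ t p) 0 := by simp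
      _ ≤ dist (Θ t p) (Θ t q) + dist (Θ t q) 0 := dist_triangle _ _ _
      _ ≤ 1 + C := by
        have := hC t
        simp only [dist_zero_right] at *
        exact add_le_add h2.le this
      _ = C + 1 := by ring
  have hne : S.Nonempty := ⟨1, ‖(1 : B)‖, fun t => by rw [h1]⟩
  have : S = Set.univ := IsClopen.eq_univ ⟨hclosed, hopen⟩ hne
  have hc : c ∈ S := this ▸ Set.mem_univ c
  exact hc

lemma aux_star_std {B : Type*} [Ring B] [StarRing B] {n : ℕ} [DecidableEq (Fin n)]
    (i j : Fin n) (b : B) :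
    star (Matrix.single i j b) = Matrix.single j i (star b) := by
  ext k l
  simp only [Matrix.star_apply, Matrix.single, Matrix.of_apply]
  by_cases h1 : i = l <;> by_cases h2 : j = k <;> simp [h1, h2, eq_comm]

/-- Units of diagonal matrices over a (noncommutative) ring. -/
lemma aux_diag_unit {B : Type*} [Ring B] {n : ℕ} [DecidableEq (Fin n)]
    (f : Fin n → B) (hf : ∀ k, IsUnit (f k)) :
    IsUnit (Matrix.diagonal f) := by
  have hf' : ∀ k, ∃ g, f k * g = 1 ∧ g * f k = 1 := by
    intro k
    obtain ⟨u, hu⟩ := hf k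
    exact ⟨u.inv, by simp [← hu], by simp [← hu]⟩
  choose g hg1 hg2 using hf'
  refine ⟨⟨Matrix.diagonal f, Matrix.diagonal g, ?_, ?_⟩, rfl⟩
  · rw [Matrix.diagonal_mul_diagonal]
    rw [show (fun k => f k * g k) = fun _ => (1:B) from funext fun k => hg1 k,
      Matrix.diagonal_one]
  · rw [Matrix.diagonal_mul_diagonal]
    rw [show (fun k => g k * f k) = fun _ => (1:B) from funext fun k => hg2 k,
      Matrix.diagonal_one]

lemma aux_spec_corner {B : Type*} [Ring B] [Algebra ℂ B] {n : ℕ} [DecidableEq (Fin n)]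
    (j : Fin n) (d : B) :
    spectrum ℂ (Matrix.single j j d) ⊆ spectrum ℂ d ∪ {0} := by
  intro lam hlam
  by_contra hc
  simp only [Set.mem_union, Set.mem_singleton_iff, not_or] at hc
  obtain ⟨h1, h2⟩ := hc
  rw [spectrum.mem_iff] at hlam
  apply hlam
  have hdiag : algebraMap ℂ (Matrix (Fin n) (Fin n) B) lam - Matrix.single j j d
      = Matrix.diagonal (fun k => if k = j then algebraMap ℂ B lam - d else algebraMap ℂ B lam) := by
    ext k l
    by_cases hk : k = l
    · subst hk
      by_cases hkj : k = j
      · subst hkj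
        simp [Matrix.algebraMap_eq_diagonal, Matrix.diagonal_apply_eq]
      · simp only [Matrix.sub_apply,
          Matrix.single_apply_of_ne _ _ _ _ _ (fun h => hkj h.1.symm)]
        simp [Matrix.algebraMap_eq_diagonal, Matrix.diagonal_apply_eq, hkj]
    · simp [Matrix.algebraMap_eq_diagonal, Matrix.diagonal_apply_ne _ hk,
        Matrix.single_apply_of_ne _ _ _ _ _ (fun h => hk (h.1.symm.trans h.2))]
  rw [hdiag]
  apply aux_diag_unit
  intro k
  by_cases hkj : k = j
  · simpa [hkj] using (spectrum.notMem_iff.mp h1)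
  · simpa [hkj] using (isUnit_iff_ne_zero.mpr h2).map (algebraMap ℂ B)

/-- The norm of `ιB` applied to a single-entry matrix is at most the norm of the entry. -/
lemma aux_corner {B MB : Type*} [CStarAlgebra B] [CStarAlgebra MB] {n : ℕ}
    (ιB : Matrix (Fin n) (Fin n) B ≃⋆ₐ[ℂ] MB) (i j : Fin n) (b : B) :
    ‖ιB (Matrix.single i j b)‖ ≤ ‖b‖ := by
  rcases subsingleton_or_nontrivial B with hB | hB
  · haveI : Subsingleton (Matrix (Fin n) (Fin n) B) := by infer_instance
    have : Matrix.single i j b = 0 := Subsingleton.elim _ _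
    simp [this]
  set x := ιB (Matrix.single i j b) with hx
  have hz : star x * x = ιB (Matrix.single j j (star b * b)) := by
    rw [hx, ← map_star, ← map_mul, aux_star_std, Matrix.single_mul_single_same]
  have hsa : IsSelfAdjoint (star x * x) := IsSelfAdjoint.star_mul_self x
  have hspec : spectrum ℂ (star x * x) ⊆ spectrum ℂ (star b * b) ∪ {0} := by
    rw [hz, AlgEquiv.spectrum_eq]
    exact aux_spec_corner j (star b * b)
  have hrad : ‖star x * x‖₊ ≤ ‖star b * b‖₊ := by
    have h1 : spectralRadius ℂ (star x * x) ≤ (‖star b * b‖₊ : ENNReal) := by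
      rw [spectralRadius]
      refine iSup₂_le fun lam hlam => ?_
      rcases hspec hlam with h | h
      · exact_mod_cast ENNReal.coe_le_coe.mpr
          (by exact_mod_cast spectrum.norm_le_norm_of_mem h)
      · simp [Set.mem_singleton_iff.mp h]
    rw [hsa.spectralRadius_eq_nnnorm] at h1
    exact_mod_cast h1
  have h2 : ‖x‖ * ‖x‖ ≤ ‖b‖ * ‖b‖ := by
    have := hrad
    rw [← NNReal.coe_le_coe] at this
    simpa [CStarRing.norm_star_mul_self] using this
  nlinarith [norm_nonneg x, norm_nonneg b]

lemma aux_negPart {C : Type*} [CStarAlgebra C] [PartialOrder C] [StarOrderedRing C]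
    {x : C} (_hx : IsSelfAdjoint x) {ε : ℝ} (hε : 0 ≤ ε)
    (hspec : ∀ μ ∈ spectrum ℝ x, -ε ≤ μ) : ‖x⁻‖ ≤ ε := by
  rw [CFC.negPart_def]
  refine norm_cfcₙ_le fun μ hμ => ?_
  rw [quasispectrum_eq_spectrum_union_zero] at hμ
  rcases hμ with hμ | hμ
  · have h := hspec μ hμ
    rw [Real.norm_eq_abs, _root_.negPart_def, abs_of_nonneg (le_max_right _ _)]
    exact max_le (by linarith) hε
  · rw [Set.mem_singleton_iff.mp hμ]
    simpa using hε

lemma aux_cfc_affine {C : Type*} [CStarAlgebra C] {z : C} (hz : IsSelfAdjoint z) (r : ℝ) :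
    cfc (fun μ : ℝ => 2 * μ - r) z = (2:ℝ) • z - r • (1 : C) := by
  rw [cfc_sub (fun μ : ℝ => 2 * μ) (fun _ : ℝ => r) z]
  rw [cfc_const_mul (2:ℝ) (fun μ : ℝ => μ) z, cfc_id' ℝ z, cfc_const r z hz,
    Algebra.algebraMap_eq_smul_one]

lemma aux_main {MA MB : Type*} [CStarAlgebra MA] [PartialOrder MA] [StarOrderedRing MA]
    [CStarAlgebra MB] [PartialOrder MB] [StarOrderedRing MB] [Nontrivial MA] [Nontrivial MB]
    (Φ : ℝ → MA → MB)
    (hsa : ∀ t a, Φ t (star a) = star (Φ t a))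
    (hunital : ∀ t, Φ t 1 = 1)
    (hlin : ∀ (c₁ c₂ : ℂ) (a₁ a₂ : MA),
      Tendsto (fun t => ‖Φ t (c₁ • a₁ + c₂ • a₂) - c₁ • Φ t a₁ - c₂ • Φ t a₂‖) atTop (𝓝 0))
    (hcontr : ∀ a, limsup (fun t => ‖Φ t a‖) atTop ≤ ‖a‖)
    (hbdd : ∀ a, ∃ C, ∀ t, ‖Φ t a‖ ≤ C)
    (a : MA) (ha : 0 ≤ a) : Tendsto (fun t => (Φ t a)⁻) atTop (𝓝 0) := by
  have haSA : IsSelfAdjoint a := .of_nonneg ha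
  have hx_sa : ∀ t, IsSelfAdjoint (Φ t a) := by
    intro t
    have h := hsa t a
    rw [haSA.star_eq] at h
    exact (h.symm : _)
  set r := ‖a‖ with hr
  have hy' : (2:ℂ) • a + (-(r:ℂ)) • (1:MA) = (2:ℝ) • a - r • (1:MA) := by
    rw [show ((2:ℂ)) = ((2:ℝ):ℂ) by norm_num, Complex.coe_smul,
      (Complex.ofReal_neg r).symm, Complex.coe_smul, neg_smul,
      ← sub_eq_add_neg]
  have hynorm : ‖(2:ℂ) • a + (-(r:ℂ)) • (1:MA)‖ ≤ r := by
    rw [hy', ← aux_cfc_affine haSA r]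
    refine norm_cfc_le (norm_nonneg a) fun μ hμ => ?_
    have h0 : 0 ≤ μ := spectrum_nonneg_of_nonneg ha hμ
    have h1 : ‖μ‖ ≤ ‖a‖ := spectrum.norm_le_norm_of_mem hμ
    rw [Real.norm_eq_abs, abs_of_nonneg h0] at h1
    rw [Real.norm_eq_abs, abs_le]
    constructor <;> [skip; skip] <;> [linarith; linarith]
  have hbddy : IsBoundedUnder (· ≤ ·) atTop
      (fun t => ‖Φ t ((2:ℂ) • a + (-(r:ℂ)) • (1:MA))‖) := by
    obtain ⟨C, hC⟩ := hbdd ((2:ℂ) • a + (-(r:ℂ)) • (1:MA))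
    exact ⟨C, eventually_map.mpr (Eventually.of_forall hC)⟩
  have hls : limsup (fun t => ‖Φ t ((2:ℂ) • a + (-(r:ℂ)) • (1:MA))‖) atTop ≤ r :=
    (hcontr _).trans hynorm
  have hdiff : Tendsto
      (fun t => ‖Φ t ((2:ℂ) • a + (-(r:ℂ)) • (1:MA)) - (2:ℂ) • Φ t a - (-(r:ℂ)) • (1:MB)‖)
      atTop (𝓝 0) := by
    have h := hlin 2 (-(r:ℂ)) a 1
    simp only [hunital] at h
    exact h
  rw [NormedAddCommGroup.tendsto_nhds_zero]
  intro ε hε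
  have h₁ : ∀ᶠ t in atTop, ‖Φ t ((2:ℂ) • a + (-(r:ℂ)) • (1:MA))‖ < r + ε/2 :=
    eventually_lt_of_limsup_lt (by linarith) hbddy
  have h₂ := hdiff.eventually (eventually_lt_nhds (show (0:ℝ) < ε/2 by linarith))
  filter_upwards [h₁, h₂] with t ht1 ht2
  have hv : ‖(2:ℝ) • Φ t a - r • (1:MB)‖ < r + ε := by
    have key : (2:ℝ) • Φ t a - r • (1:MB)
        = Φ t ((2:ℂ) • a + (-(r:ℂ)) • (1:MA))
          - (Φ t ((2:ℂ) • a + (-(r:ℂ)) • (1:MA)) - (2:ℂ) • Φ t a - (-(r:ℂ)) • (1:MB)) := by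
      have e1 : ((2:ℂ)) • Φ t a = (2:ℝ) • Φ t a := by
        rw [show ((2:ℂ)) = ((2:ℝ):ℂ) by norm_num, Complex.coe_smul]
      have e2 : ((-(r:ℂ))) • (1:MB) = -(r • (1:MB)) := by
        rw [(Complex.ofReal_neg r).symm, Complex.coe_smul, neg_smul]
      rw [sub_sub, sub_sub_cancel, e1, e2, ← sub_eq_add_neg]
    rw [key]
    calc ‖_‖ ≤ ‖Φ t ((2:ℂ) • a + (-(r:ℂ)) • (1:MA))‖
          + ‖Φ t ((2:ℂ) • a + (-(r:ℂ)) • (1:MA)) - (2:ℂ) • Φ t a - (-(r:ℂ)) • (1:MB)‖ :=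
        norm_sub_le _ _
      _ < (r + ε/2) + ε/2 := add_lt_add ht1 ht2
      _ = r + ε := by ring
  have hspec : ∀ μ ∈ spectrum ℝ (Φ t a), -(ε/2) ≤ μ := by
    intro μ hμ
    have hb := norm_apply_le_norm_cfc (fun μ : ℝ => 2*μ - r) (Φ t a) hμ
    rw [aux_cfc_affine (hx_sa t) r] at hb
    have habs : |2*μ - r| < r + ε := lt_of_le_of_lt (by simpa using hb) hv
    rw [abs_lt] at habs
    linarith [habs.1]
  have hle := aux_negPart (hx_sa t) (show (0:ℝ) ≤ ε/2 by linarith) hspec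
  calc ‖(Φ t a)⁻‖ ≤ ε/2 := hle
    _ < ε := by linarith


/-- `MA` and `MB` are the C*-algebras `M_n(A)` and `M_n(B)`: they are C*-algebras
equipped with `*`-algebra isomorphisms `ιA`, `ιB` from the matrix algebras
`Matrix (Fin n) (Fin n) A` and `Matrix (Fin n) (Fin n) B`.  The amplification
`Θ_t ⊗ id_{M_n}` is the entrywise application `a ↦ ιB ((ιA.symm a).map (Θ t))`. -/
theorem stmt_13 {A B : Type*} [CStarAlgebra A] [PartialOrder A] [StarOrderedRing A]
    [CStarAlgebra B] [PartialOrder B] [StarOrderedRing B]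
    (n : ℕ) (hn : 1 ≤ n)
    {MA MB : Type*} [CStarAlgebra MA] [PartialOrder MA] [StarOrderedRing MA]
    [CStarAlgebra MB] [PartialOrder MB] [StarOrderedRing MB]
    (ιA : Matrix (Fin n) (Fin n) A ≃⋆ₐ[ℂ] MA)
    (ιB : Matrix (Fin n) (Fin n) B ≃⋆ₐ[ℂ] MB)
    (Θ : ℝ → A → B)
    (hcont : ∀ a, Continuous fun t => Θ t a)
    (hequi : Equicontinuous Θ)
    (hsa : ∀ (t : ℝ) (a : MA),
      ιB ((ιA.symm (star a)).map (Θ t)) = star (ιB ((ιA.symm a).map (Θ t))))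
    (hunital : ∀ t : ℝ, ιB ((ιA.symm 1).map (Θ t)) = 1)
    (hlin : ∀ (c₁ c₂ : ℂ) (a₁ a₂ : MA),
      Tendsto
        (fun t => ‖ιB ((ιA.symm (c₁ • a₁ + c₂ • a₂)).map (Θ t)) -
          c₁ • ιB ((ιA.symm a₁).map (Θ t)) - c₂ • ιB ((ιA.symm a₂).map (Θ t))‖)
        atTop (nhds 0))
    (hcontr : ∀ a : MA,
      Filter.limsup (fun t => ‖ιB ((ιA.symm a).map (Θ t))‖) atTop ≤ ‖a‖) :
    ∀ a : MA, 0 ≤ a →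
      Tendsto (fun t => (ιB ((ιA.symm a).map (Θ t)))⁻) atTop (nhds 0) := by
  intro a ha
  rcases subsingleton_or_nontrivial MB with hMB | hMB
  · have h0 : (fun t => (ιB ((ιA.symm a).map (Θ t)))⁻) = fun _ => (0:MB) :=
      funext fun t => Subsingleton.elim _ _
    rw [h0]; exact tendsto_const_nhds
  have h1B : ∀ t, Θ t 1 = 1 := by
    intro t
    have h := hunital t
    rw [map_one ιA.symm] at h
    have h2 : ((1 : Matrix (Fin n) (Fin n) A).map (Θ t)) = 1 :=
      ιB.injective (h.trans (map_one ιB).symm)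
    have h3 := congrFun (congrFun h2 ⟨0, hn⟩) ⟨0, hn⟩
    simpa [Matrix.map_apply, Matrix.one_apply] using h3
  rcases subsingleton_or_nontrivial A with hA | hA
  · have hA1 : ιA.symm a = 1 := Subsingleton.elim _ _
    have hconst : ∀ t, ιB ((ιA.symm a).map (Θ t)) = 1 := by
      intro t
      rw [hA1]
      have h := hunital t
      rwa [map_one ιA.symm] at h
    have hone : ((1:MB))⁻ = 0 := by
      rw [CFC.negPart_eq_zero_iff (1:MB) (IsSelfAdjoint.one MB)]
      simpa using star_mul_self_nonneg (1:MB)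
    have h0 : (fun t => (ιB ((ιA.symm a).map (Θ t)))⁻) = fun _ => (0:MB) :=
      funext fun t => by rw [hconst t, hone]
    rw [h0]; exact tendsto_const_nhds
  haveI hMA : Nontrivial MA := by
    refine ⟨⟨ιA 0, ιA 1, fun h => ?_⟩⟩
    have h2 := ιA.injective h
    have h3 := congrFun (congrFun h2 ⟨0, hn⟩) ⟨0, hn⟩
    simp [Matrix.one_apply] at h3
  have hΦbdd : ∀ y : MA, ∃ C, ∀ t, ‖ιB ((ιA.symm y).map (Θ t))‖ ≤ C := by
    intro y
    have hb : ∀ c : A, ∃ C, ∀ t, ‖Θ t c‖ ≤ C := aux_bounded Θ hequi h1B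
    choose C hC using fun p : Fin n × Fin n => hb (ιA.symm y p.1 p.2)
    refine ⟨∑ p : Fin n × Fin n, C p, fun t => ?_⟩
    have hsum : (ιA.symm y).map (Θ t)
        = ∑ i, ∑ j, Matrix.single i j (Θ t (ιA.symm y i j)) := by
      conv_lhs => rw [Matrix.matrix_eq_sum_single ((ιA.symm y).map (Θ t))]
      simp [Matrix.map_apply]
    calc ‖ιB ((ιA.symm y).map (Θ t))‖
        = ‖∑ i, ∑ j, ιB (Matrix.single i j (Θ t (ιA.symm y i j)))‖ := by
          rw [hsum]; simp only [map_sum]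
      _ ≤ ∑ i, ∑ j, ‖ιB (Matrix.single i j (Θ t (ιA.symm y i j)))‖ :=
          (norm_sum_le _ _).trans (Finset.sum_le_sum fun i _ => norm_sum_le _ _)
      _ ≤ ∑ i, ∑ j, C (i, j) := Finset.sum_le_sum fun i _ => Finset.sum_le_sum fun j _ =>
          (aux_corner ιB i j _).trans (hC (i, j) t)
      _ = ∑ p : Fin n × Fin n, C p := by rw [← Fintype.sum_prod_type]
  exact aux_main (fun t x => ιB ((ιA.symm x).map (Θ t)))
    (fun t x => hsa t x) hunital hlin hcontr hΦbdd a ha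
end
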